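/- Let a, b, c > 0 with c ≠ a, let t_s ∈ ℝ, and let λ_s satisfy 0 < λ_s ≤ 1/(2a). For t ≤ t_s define α(t) = e^{−a(t_s − t)}, and L(t) = a·b·[ λ_s·(α(t) + e^{−(c−a)(t_s − t)}) + (1/(c − a))·(e^{−(c−a)(t_s − t)} − c/a) ]. Then L(t_s) = a b (2λ_s − 1/a) ≤ 0 and L'(t) = a b·[ a λ_s α(t) + ((c − a)λ_s + 1)·e^{−(c−a)(t_s − t)} ] > 0 for all t ≤ t_s; consequently L(t) ≤ 0 for all t ≤ t_s. -/

import Mathlib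

/-- Along a feeding tributary meeting the switch line at time `t_s` with
adjoint value `0 < λ_s ≤ 1/(2a)`, the function
`L(t) = a b [λ_s (e^{-a(t_s-t)} + e^{-(c-a)(t_s-t)}) + (1/(c-a))(e^{-(c-a)(t_s-t)} - c/a)]`
satisfies `L(t_s) = a b (2λ_s - 1/a) ≤ 0` and
`L'(t) = a b [a λ_s e^{-a(t_s-t)} + ((c-a)λ_s + 1) e^{-(c-a)(t_s-t)}] > 0` for `t ≤ t_s`;
consequently `L(t) ≤ 0` for all `t ≤ t_s`. -/
theorem tributary_L_nonpositive (a b c ts lams : ℝ)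
    (ha : 0 < a) (hb : 0 < b) (hc : 0 < c) (hca : c ≠ a)
    (hlams_pos : 0 < lams) (hlams_le : lams ≤ 1 / (2 * a))
    (L : ℝ → ℝ)
    (hL : ∀ t, L t = a * b * (lams * (Real.exp (-(a * (ts - t)))
        + Real.exp (-((c - a) * (ts - t))))
      + (1 / (c - a)) * (Real.exp (-((c - a) * (ts - t))) - c / a))) :
    (L ts = a * b * (2 * lams - 1 / a) ∧ L ts ≤ 0) ∧
    (∀ t ≤ ts,
      HasDerivAt L (a * b * (a * lams * Real.exp (-(a * (ts - t)))
        + ((c - a) * lams + 1) * Real.exp (-((c - a) * (ts - t))))) t ∧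
      0 < a * b * (a * lams * Real.exp (-(a * (ts - t)))
        + ((c - a) * lams + 1) * Real.exp (-((c - a) * (ts - t))))) ∧
    (∀ t ≤ ts, L t ≤ 0) := by
  have hca' : c - a ≠ 0 := sub_ne_zero.mpr hca
  -- value at ts
  have hLts : L ts = a * b * (2 * lams - 1 / a) := by
    rw [hL ts]
    simp only [sub_self, mul_zero, neg_zero, Real.exp_zero]
    field_simp
    ring
  have hle0 : L ts ≤ 0 := by
    rw [hLts]
    apply mul_nonpos_of_nonneg_of_nonpos (le_of_lt (mul_pos ha hb))
    have : lams ≤ 1 / (2 * a) := hlams_le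
    have h2a : 0 < 2 * a := by linarith
    rw [sub_nonpos, le_div_iff₀ ha]
    rw [le_div_iff₀ h2a] at this
    linarith
  -- derivative
  have hderiv : ∀ t : ℝ, HasDerivAt L (a * b * (a * lams * Real.exp (-(a * (ts - t)))
        + ((c - a) * lams + 1) * Real.exp (-((c - a) * (ts - t))))) t := by
    intro t
    have h1 : HasDerivAt (fun t => Real.exp (-(a * (ts - t))))
        (a * Real.exp (-(a * (ts - t)))) t := by
      have : HasDerivAt (fun t : ℝ => -(a * (ts - t))) a t := by
        have := ((hasDerivAt_id t).const_sub ts).const_mul a |>.neg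
        simpa [Pi.neg_def] using this
      simpa [mul_comm] using this.exp
    have h2 : HasDerivAt (fun t => Real.exp (-((c - a) * (ts - t))))
        ((c - a) * Real.exp (-((c - a) * (ts - t)))) t := by
      have : HasDerivAt (fun t : ℝ => -((c - a) * (ts - t))) (c - a) t := by
        have := ((hasDerivAt_id t).const_sub ts).const_mul (c - a) |>.neg
        simpa [Pi.neg_def] using this
      simpa [mul_comm] using this.exp
    have h3 : HasDerivAt (fun t => a * b * (lams * (Real.exp (-(a * (ts - t)))
        + Real.exp (-((c - a) * (ts - t))))
      + (1 / (c - a)) * (Real.exp (-((c - a) * (ts - t))) - c / a)))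
        (a * b * (lams * (a * Real.exp (-(a * (ts - t)))
        + (c - a) * Real.exp (-((c - a) * (ts - t))))
      + (1 / (c - a)) * ((c - a) * Real.exp (-((c - a) * (ts - t)))))) t := by
      exact (((h1.add h2).const_mul lams).add (((h2.sub_const (c / a)).const_mul
        (1 / (c - a))))).const_mul (a * b)
    have heq : (a * b * (lams * (a * Real.exp (-(a * (ts - t)))
        + (c - a) * Real.exp (-((c - a) * (ts - t))))
      + (1 / (c - a)) * ((c - a) * Real.exp (-((c - a) * (ts - t))))))
        = a * b * (a * lams * Real.exp (-(a * (ts - t)))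
        + ((c - a) * lams + 1) * Real.exp (-((c - a) * (ts - t)))) := by
      field_simp
      ring
    rw [heq] at h3
    exact h3.congr_of_eventuallyEq (Filter.Eventually.of_forall fun x => hL x)
  -- derivative positivity
  have hpos : ∀ t : ℝ, 0 < a * b * (a * lams * Real.exp (-(a * (ts - t)))
        + ((c - a) * lams + 1) * Real.exp (-((c - a) * (ts - t)))) := by
    intro t
    apply mul_pos (mul_pos ha hb)
    have e1 := Real.exp_pos (-(a * (ts - t)))
    have e2 := Real.exp_pos (-((c - a) * (ts - t)))
    have h2a : 0 < 2 * a := by linarith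
    have hl2 : 2 * a * lams ≤ 1 := by
      rw [le_div_iff₀ h2a] at hlams_le; linarith
    have hcoef : 0 < (c - a) * lams + 1 := by nlinarith
    have := mul_pos (mul_pos ha hlams_pos) e1
    nlinarith
  refine ⟨⟨hLts, hle0⟩, fun t _ => ⟨hderiv t, hpos t⟩, ?_⟩
  -- monotonicity
  intro t ht
  rcases eq_or_lt_of_le ht with rfl | hlt
  · exact hle0
  have hmono : StrictMonoOn L (Set.Iic ts) := by
    apply StrictMonoOn.mono (s := Set.univ) _ (Set.subset_univ _)
    apply strictMonoOn_of_deriv_pos convex_univ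
    · exact (fun x _ => ((hderiv x).differentiableAt.continuousAt.continuousWithinAt))
    · intro x _
      rw [(hderiv x).deriv]
      exact hpos x
  have := hmono (Set.mem_Iic.mpr ht) (Set.mem_Iic.mpr le_rfl) hlt
  linarith
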